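/- Round trips through a fee-charging constant-product pool are strictly lossy: let r_A, r_B, x be positive reals and γ ∈ (0, 1], and let x' = γ²·x·(r_A + x)/(r_A + γ²·x) be the asset-A amount recovered from swapping x units of A into the pool and swapping the resulting asset-B output back. Then x' < x if γ < 1, and x' = x if γ = 1. -/
import Mathlib


/-- Round trips through a fee-charging constant-product pool are strictly
lossy. Let `rA, rB, x > 0`, `γ ∈ (0, 1]`, and let `x' = γ²·x·(rA + x)/(rA + γ²·x)` be the
asset-A amount recovered from swapping `x` units of A into the pool and swapping the
resulting asset-B output back. Then `x' < x` if `γ < 1`, and `x' = x` if `γ = 1`. -/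
theorem stmt_12 (rA rB x γ : ℝ) (hA : 0 < rA) (hB : 0 < rB) (hx : 0 < x)
    (hγ0 : 0 < γ) (hγ1 : γ ≤ 1) :
    (γ < 1 → γ ^ 2 * x * (rA + x) / (rA + γ ^ 2 * x) < x) ∧
    (γ = 1 → γ ^ 2 * x * (rA + x) / (rA + γ ^ 2 * x) = x) := by
  have hden : 0 < rA + γ ^ 2 * x := by positivity
  constructor
  · intro hlt
    rw [div_lt_iff₀ hden]
    have hγ2 : γ ^ 2 < 1 := by nlinarith
    nlinarith [mul_pos hx hA]
  · intro h
    subst h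
    field_simp
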